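/- Fix real numbers d > 0, β > 0, c > 0 and set λ_1 = (−c + √(c² + 4βd))/(2d) and λ_2 = (c + √(c² + 4βd))/(2d), so that −λ_1 and λ_2 are the two roots of dλ² − cλ − β = 0. Let Λ > 0 and γ > 1 satisfy γΛ < λ_2, let ν > 0 and ν_γ > 0, set M = (β + cΛ − dΛ²)ν, and let M_γ be any real number with M_γ < (β + cγΛ − d(γΛ)²)ν_γ. Then M/((λ_1 + Λ)ν) + M/((λ_2 − Λ)ν) − M_γ/((λ_1 + γΛ)ν_γ) − M_γ/((λ_2 − γΛ)ν_γ) > 0. -/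

import Mathlib

theorem stmt_11 (d β c : ℝ) (hd : 0 < d) (hβ : 0 < β) (hc : 0 < c)
    (Λ γ ν νγ Mγ : ℝ) (hΛ : 0 < Λ) (hγ : 1 < γ)
    (hγΛ : γ * Λ < (c + Real.sqrt (c ^ 2 + 4 * β * d)) / (2 * d))
    (hν : 0 < ν) (hνγ : 0 < νγ)
    (hMγ : Mγ < (β + c * (γ * Λ) - d * (γ * Λ) ^ 2) * νγ) :
    let l₁ : ℝ := (-c + Real.sqrt (c ^ 2 + 4 * β * d)) / (2 * d)
    let l₂ : ℝ := (c + Real.sqrt (c ^ 2 + 4 * β * d)) / (2 * d)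
    let M : ℝ := (β + c * Λ - d * Λ ^ 2) * ν
    0 < M / ((l₁ + Λ) * ν) + M / ((l₂ - Λ) * ν)
        - Mγ / ((l₁ + γ * Λ) * νγ) - Mγ / ((l₂ - γ * Λ) * νγ) := by
  intro l₁ l₂ M
  have hl1 : l₁ = (-c + Real.sqrt (c ^ 2 + 4 * β * d)) / (2 * d) := rfl
  have hl2 : l₂ = (c + Real.sqrt (c ^ 2 + 4 * β * d)) / (2 * d) := rfl
  have hM : M = (β + c * Λ - d * Λ ^ 2) * ν := rfl
  set s := Real.sqrt (c ^ 2 + 4 * β * d) with hs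
  have hsq : s ^ 2 = c ^ 2 + 4 * β * d := by
    rw [hs]; exact Real.sq_sqrt (by positivity)
  have hcs : c < s := by nlinarith [Real.sqrt_nonneg (c ^ 2 + 4 * β * d)]
  have hd' : (0:ℝ) < 2 * d := by linarith
  have hl1pos : 0 < l₁ := by rw [hl1]; exact div_pos (by linarith) hd'
  have hl2γ : 0 < l₂ - γ * Λ := by rw [hl2]; linarith
  have hΛγ : Λ < γ * Λ := by nlinarith
  have hl2Λ : 0 < l₂ - Λ := by linarith
  have hl1Λ : 0 < l₁ + Λ := by linarith
  have hl1γ : 0 < l₁ + γ * Λ := by linarith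
  have key : ∀ x : ℝ, β + c * x - d * x ^ 2 = d * (l₁ + x) * (l₂ - x) := by
    intro x
    rw [hl1, hl2]
    field_simp
    nlinarith [hsq]
  have eq1 : M / ((l₁ + Λ) * ν) = d * (l₂ - Λ) := by
    rw [hM, key Λ]
    field_simp
  have eq2 : M / ((l₂ - Λ) * ν) = d * (l₁ + Λ) := by
    rw [hM, key Λ]
    field_simp
  have hMγ' : Mγ < d * (l₁ + γ * Λ) * (l₂ - γ * Λ) * νγ := by
    rw [← key]; exact hMγ
  have lt1 : Mγ / ((l₁ + γ * Λ) * νγ) < d * (l₂ - γ * Λ) := by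
    rw [div_lt_iff₀ (by positivity)]
    calc Mγ < d * (l₁ + γ * Λ) * (l₂ - γ * Λ) * νγ := hMγ'
      _ = d * (l₂ - γ * Λ) * ((l₁ + γ * Λ) * νγ) := by ring
  have lt2 : Mγ / ((l₂ - γ * Λ) * νγ) < d * (l₁ + γ * Λ) := by
    rw [div_lt_iff₀ (by positivity)]
    calc Mγ < d * (l₁ + γ * Λ) * (l₂ - γ * Λ) * νγ := hMγ'
      _ = d * (l₁ + γ * Λ) * ((l₂ - γ * Λ) * νγ) := by ring
  rw [eq1, eq2]
  linarith
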